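/- For n ≥ 5, in the convex polytope graph S''_n, for every index i, no vertex w is equidistant from a_i and b_i, and no vertex w is equidistant from c_i and d_i. -/

import Mathlib

/-- `S` is a distance-equalizer set of `G`. -/
def IsDistEqSet {V : Type*} (G : SimpleGraph V) (S : Set V) : Prop :=
  ∀ u v : V, u ∉ S → v ∉ S → u ≠ v → ∃ x ∈ S, G.dist u x = G.dist v x

/-- The equidistant dimension of `G`. -/
noncomputable def eqdim {V : Type*} (G : SimpleGraph V) : ℕ :=
  sInf {k | ∃ S : Finset V, IsDistEqSet G ↑S ∧ S.card = k}

/-- The convex polytope graph `S''_n` on vertex layers a=0, b=1, c=2, d=3. -/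
def S2Graph (n : ℕ) : SimpleGraph (Fin 4 × ZMod n) :=
  SimpleGraph.fromRel (fun x y =>
    (x.1 = y.1 ∧ y.2 = x.2 + 1) ∨
    (x.1 = 0 ∧ y.1 = 1 ∧ y.2 = x.2) ∨
    (x.1 = 1 ∧ y.1 = 2 ∧ y.2 = x.2) ∨
    (x.1 = 2 ∧ y.1 = 3 ∧ y.2 = x.2) ∨
    (x.1 = 1 ∧ y.1 = 2 ∧ x.2 = y.2 + 1))

namespace S2Aux

open SimpleGraph

variable {n : ℕ}

lemma zm_one_ne_zero (hn : 5 ≤ n) : (1 : ZMod n) ≠ 0 := by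
  haveI : NeZero n := ⟨by omega⟩
  intro h
  have := ZMod.val_one'' (n := n) (by omega)
  rw [h, ZMod.val_zero] at this; omega

lemma adj_ring (hn : 5 ≤ n) (t : Fin 4) (j : ZMod n) : (S2Graph n).Adj (t, j) (t, j+1) := by
  simp only [S2Graph, fromRel_adj]
  refine ⟨?_, by tauto⟩
  simp only [ne_eq, Prod.mk.injEq, not_and]
  intro _ h
  exact zm_one_ne_zero hn (by linear_combination -h)

lemma adj_ab (hn : 5 ≤ n) (j : ZMod n) : (S2Graph n).Adj (0, j) (1, j) := by
  simp only [S2Graph, fromRel_adj]; exact ⟨by simp, by tauto⟩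

lemma adj_bc (hn : 5 ≤ n) (j : ZMod n) : (S2Graph n).Adj (1, j) (2, j) := by
  simp only [S2Graph, fromRel_adj]; exact ⟨by simp, by tauto⟩

lemma adj_cd (hn : 5 ≤ n) (j : ZMod n) : (S2Graph n).Adj (2, j) (3, j) := by
  simp only [S2Graph, fromRel_adj]; exact ⟨by simp, by tauto⟩

lemma nbr_a (i : ZMod n) (y : Fin 4 × ZMod n) (h : (S2Graph n).Adj (0,i) y) :
    y = (0, i+1) ∨ y = (0, i-1) ∨ y = (1, i) := by
  obtain ⟨t, j⟩ := y
  simp only [S2Graph, fromRel_adj] at h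
  obtain ⟨hne, h | h⟩ := h <;> fin_cases t <;> simp_all

lemma nbr_d (i : ZMod n) (y : Fin 4 × ZMod n) (h : (S2Graph n).Adj (3,i) y) :
    y = (3, i+1) ∨ y = (3, i-1) ∨ y = (2, i) := by
  obtain ⟨t, j⟩ := y
  simp only [S2Graph, fromRel_adj] at h
  obtain ⟨hne, h | h⟩ := h <;> fin_cases t <;> simp_all

lemma reach_ring (hn : 5 ≤ n) (t : Fin 4) (j : ZMod n) (m : ℕ) :
    (S2Graph n).Reachable (t, j) (t, j + (m : ZMod n)) := by
  induction m with
  | zero => simpa using Reachable.refl ((t, j) : Fin 4 × ZMod n)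
  | succ m ih =>
      refine ih.trans ?_
      have : (((m : ℕ) + 1 : ℕ) : ZMod n) = (m : ZMod n) + 1 := by push_cast; ring
      rw [this, ← add_assoc]
      exact (adj_ring hn t (j + (m : ZMod n))).reachable

lemma reach_b (hn : 5 ≤ n) (x : Fin 4 × ZMod n) : (S2Graph n).Reachable x (1, x.2) := by
  obtain ⟨t, j⟩ := x
  fin_cases t
  · exact ((adj_ab hn j).symm.reachable : (S2Graph n).Reachable (1, j) (0, j)).symm
  · exact Reachable.refl _
  · exact ((adj_bc hn j).reachable : (S2Graph n).Reachable (1, j) (2, j)).symm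
  · exact (((adj_cd hn j).reachable : (S2Graph n).Reachable (2, j) (3, j)).symm.trans
      ((adj_bc hn j).reachable : (S2Graph n).Reachable (1, j) (2, j)).symm)

lemma s2_connected (hn : 5 ≤ n) : (S2Graph n).Connected := by
  haveI : NeZero n := ⟨by omega⟩
  rw [connected_iff_exists_forall_reachable]
  refine ⟨(1, 0), fun x => ?_⟩
  refine ((reach_b hn x).trans ?_).symm
  have := reach_ring hn 1 (0 : ZMod n) (x.2).val
  rw [zero_add, ZMod.natCast_zmod_val] at this
  exact this.symm

lemma lip_walk {V : Type*} {G : SimpleGraph V} (f : V → ℕ)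
    (hf : ∀ u v, G.Adj u v → f v ≤ f u + 1) {u v : V} (p : G.Walk u v) :
    f v ≤ f u + p.length := by
  induction p with
  | nil => simp
  | cons h q ih =>
      have := hf _ _ h
      simp only [Walk.length_cons]; omega

lemma dist_lower (hn : 5 ≤ n) (f : Fin 4 × ZMod n → ℕ)
    (hf : ∀ u v, (S2Graph n).Adj u v → f v ≤ f u + 1) (u v : Fin 4 × ZMod n) :
    f v ≤ f u + (S2Graph n).dist u v := by
  obtain ⟨p, hp⟩ := ((s2_connected hn) u v).exists_walk_length_eq_dist
  rw [← hp]; exact lip_walk f hf p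

lemma dist_ring_le (hn : 5 ≤ n) (t : Fin 4) (j : ZMod n) (m : ℕ) :
    (S2Graph n).dist (t, j) (t, j + (m : ℕ)) ≤ m := by
  induction m with
  | zero => simp
  | succ m ih =>
      have h3 := (s2_connected hn).dist_triangle (u := ((t, j) : Fin 4 × ZMod n))
        (v := (t, j + (m : ℕ))) (w := (t, j + ((m : ℕ) + 1 : ℕ)))
      have hcast : (((m : ℕ) + 1 : ℕ) : ZMod n) = (m : ZMod n) + 1 := by push_cast; ring
      have hadj : (S2Graph n).Adj (t, j + (m : ℕ)) (t, j + ((m : ℕ)+1 : ℕ)) := by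
        rw [hcast, ← add_assoc]; exact adj_ring hn t _
      have := dist_le hadj.toWalk
      simp only [Walk.length_cons, Walk.length_nil] at this
      omega

def cv (z : ZMod n) : ℕ := min z.val (n - z.val)

lemma cv_neg (hn : 5 ≤ n) (z : ZMod n) : cv (-z) = cv z := by
  haveI : NeZero n := ⟨by omega⟩
  rcases eq_or_ne z 0 with rfl | hz
  · simp
  · have h := ZMod.neg_val z
    rw [if_neg hz] at h
    have := z.val_lt
    simp only [cv, h]; omega

lemma cv_step (hn : 5 ≤ n) (z : ZMod n) : cv (z+1) ≤ cv z + 1 ∧ cv z ≤ cv (z+1) + 1 := by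
  haveI : NeZero n := ⟨by omega⟩
  have h1 : (1 : ZMod n).val = 1 := ZMod.val_one'' (by omega)
  have h := ZMod.val_add z 1
  rw [h1] at h
  have hv := z.val_lt
  rcases Nat.lt_or_ge (z.val + 1) n with hlt | hge
  · rw [Nat.mod_eq_of_lt hlt] at h
    simp only [cv, h]; omega
  · have hh : z.val + 1 = n := by omega
    rw [hh, Nat.mod_self] at h
    simp only [cv, h]; omega

lemma dist_ring_le_cv (hn : 5 ≤ n) (t : Fin 4) (i l : ZMod n) :
    (S2Graph n).dist (t, i) (t, l) ≤ cv (l - i) := by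
  haveI : NeZero n := ⟨by omega⟩
  rcases eq_or_ne l i with rfl | hne
  · simp [cv, sub_self]
  · have h1 : (S2Graph n).dist (t, i) (t, l) ≤ (l - i).val := by
      have := dist_ring_le hn t i (l - i).val
      rwa [ZMod.natCast_zmod_val, add_sub_cancel] at this
    have h2 : (S2Graph n).dist (t, i) (t, l) ≤ (i - l).val := by
      have := dist_ring_le hn t l (i - l).val
      rw [ZMod.natCast_zmod_val, add_sub_cancel] at this
      rwa [dist_comm] at this
    have hz : l - i ≠ 0 := sub_ne_zero.mpr hne
    have hneg : (i - l).val = n - (l - i).val := by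
      have := ZMod.neg_val (l - i)
      rw [if_neg hz] at this
      rw [← this]; ring_nf
    have := (l - i).val_lt
    simp only [cv]; omega

/-- Chain lemma for the a/b pair. -/
lemma chain_a (hn : 5 ≤ n) (w : Fin 4 × ZMod n) :
    ∀ k : ℕ, ∀ i : ZMod n, (S2Graph n).dist (0, i) w = k →
      k ≤ (S2Graph n).dist (1, i) w → w.1 = 0 := by
  intro k
  induction k using Nat.strong_induction_on with
  | _ k ih =>
    intro i hd hb
    rcases Nat.eq_zero_or_pos k with rfl | hk
    · have : ((0 : Fin 4), i) = w := ((s2_connected hn).dist_eq_zero_iff).mp hd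
      rw [← this]
    · obtain ⟨p, hp⟩ := ((s2_connected hn) (0,i) w).exists_walk_length_eq_dist
      rw [hd] at hp
      cases p with
      | nil => rfl
      | @cons _ u _ h q =>
          have hq : (S2Graph n).dist u w ≤ k - 1 := by
            have := dist_le q
            rw [Walk.length_cons] at hp; omega
          rcases nbr_a i u h with rfl | rfl | rfl
          · -- u = (0, i+1)
            have htri := (s2_connected hn).dist_triangle
              (u := ((1,i) : Fin 4 × ZMod n)) (v := (1,i+1)) (w := w)
            have h1 : (S2Graph n).dist (1,i) (1,i+1) ≤ 1 := by
              have := dist_le (adj_ring hn 1 i).toWalk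
              simpa using this
            have hgoal : (S2Graph n).dist (0, i+1) w ≤ (S2Graph n).dist (1, i+1) w := by omega
            exact ih ((S2Graph n).dist (0, i+1) w) (by omega) (i+1) rfl hgoal
          · -- u = (0, i-1)
            have htri := (s2_connected hn).dist_triangle
              (u := ((1,i) : Fin 4 × ZMod n)) (v := (1,i-1)) (w := w)
            have h1 : (S2Graph n).dist (1,i) (1,i-1) ≤ 1 := by
              have hadj : (S2Graph n).Adj (1, i-1) (1, i) := by
                have := adj_ring hn 1 (i-1); rwa [sub_add_cancel] at this
              have := dist_le hadj.symm.toWalk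
              simpa using this
            have hgoal : (S2Graph n).dist (0, i-1) w ≤ (S2Graph n).dist (1, i-1) w := by omega
            exact ih ((S2Graph n).dist (0, i-1) w) (by omega) (i-1) rfl hgoal
          · omega

/-- Chain lemma for the c/d pair. -/
lemma chain_d (hn : 5 ≤ n) (w : Fin 4 × ZMod n) :
    ∀ k : ℕ, ∀ i : ZMod n, (S2Graph n).dist (3, i) w = k →
      k ≤ (S2Graph n).dist (2, i) w → w.1 = 3 := by
  intro k
  induction k using Nat.strong_induction_on with
  | _ k ih =>
    intro i hd hb
    rcases Nat.eq_zero_or_pos k with rfl | hk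
    · have : ((3 : Fin 4), i) = w := ((s2_connected hn).dist_eq_zero_iff).mp hd
      rw [← this]
    · obtain ⟨p, hp⟩ := ((s2_connected hn) (3,i) w).exists_walk_length_eq_dist
      rw [hd] at hp
      cases p with
      | nil => rfl
      | @cons _ u _ h q =>
          have hq : (S2Graph n).dist u w ≤ k - 1 := by
            have := dist_le q
            rw [Walk.length_cons] at hp; omega
          rcases nbr_d i u h with rfl | rfl | rfl
          · have htri := (s2_connected hn).dist_triangle
              (u := ((2,i) : Fin 4 × ZMod n)) (v := (2,i+1)) (w := w)
            have h1 : (S2Graph n).dist (2,i) (2,i+1) ≤ 1 := by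
              have := dist_le (adj_ring hn 2 i).toWalk
              simpa using this
            have hgoal : (S2Graph n).dist (3, i+1) w ≤ (S2Graph n).dist (2, i+1) w := by omega
            exact ih ((S2Graph n).dist (3, i+1) w) (by omega) (i+1) rfl hgoal
          · have htri := (s2_connected hn).dist_triangle
              (u := ((2,i) : Fin 4 × ZMod n)) (v := (2,i-1)) (w := w)
            have h1 : (S2Graph n).dist (2,i) (2,i-1) ≤ 1 := by
              have hadj : (S2Graph n).Adj (2, i-1) (2, i) := by
                have := adj_ring hn 2 (i-1); rwa [sub_add_cancel] at this
              have := dist_le hadj.symm.toWalk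
              simpa using this
            have hgoal : (S2Graph n).dist (3, i-1) w ≤ (S2Graph n).dist (2, i-1) w := by omega
            exact ih ((S2Graph n).dist (3, i-1) w) (by omega) (i-1) rfl hgoal
          · omega

def fA (l : ZMod n) (x : Fin 4 × ZMod n) : ℕ :=
  if x.1 = 0 then cv (x.2 - l)
  else if x.1 = 1 then cv (x.2 - l) + 1
  else if x.1 = 2 then min (cv (x.2 - l)) (cv (x.2 - l + 1)) + 2
  else min (cv (x.2 - l)) (cv (x.2 - l + 1)) + 3

lemma fA_lip (hn : 5 ≤ n) (l : ZMod n) :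
    ∀ u v, (S2Graph n).Adj u v → fA l v ≤ fA l u + 1 := by
  rintro ⟨s, j⟩ ⟨t, m⟩ h
  simp only [S2Graph, fromRel_adj] at h
  have e1 : ∀ j : ZMod n, j + 1 - l = j - l + 1 := fun j => by ring
  have e2 : ∀ j : ZMod n, j + 1 - l + 1 = j - l + 1 + 1 := fun j => by ring
  obtain ⟨hne, h | h⟩ := h <;>
    rcases h with ⟨rfl, rfl⟩ | ⟨rfl, rfl, rfl⟩ | ⟨rfl, rfl, rfl⟩ | ⟨rfl, rfl, rfl⟩ |
      ⟨rfl, rfl, rfl⟩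
  case inl.inl =>
    have s1 := cv_step hn (j - l)
    have s2 := cv_step hn (j - l + 1)
    fin_cases s <;> simp [fA, e1, e2] <;> omega
  case inl.inr.inl =>
    simp [fA]
  case inl.inr.inr.inl =>
    have s1 := cv_step hn (m - l)
    simp [fA] <;> omega
  case inl.inr.inr.inr.inl =>
    simp [fA] <;> omega
  case inl.inr.inr.inr.inr =>
    have s1 := cv_step hn (m - l)
    simp [fA, e1, e2] <;> omega
  case inr.inl =>
    have s1 := cv_step hn (m - l)
    have s2 := cv_step hn (m - l + 1)
    fin_cases t <;> simp [fA, e1, e2] <;> omega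
  case inr.inr.inl =>
    simp [fA] <;> omega
  case inr.inr.inr.inl =>
    have s1 := cv_step hn (j - l)
    simp [fA] <;> omega
  case inr.inr.inr.inr.inl =>
    simp [fA] <;> omega
  case inr.inr.inr.inr.inr =>
    have s1 := cv_step hn (j - l)
    have s2 := cv_step hn (j - l + 1)
    simp [fA, e1, e2] <;> omega

def fD (l : ZMod n) (x : Fin 4 × ZMod n) : ℕ :=
  if x.1 = 3 then cv (x.2 - l)
  else if x.1 = 2 then cv (x.2 - l) + 1
  else if x.1 = 1 then min (cv (x.2 - l)) (cv (x.2 - l - 1)) + 2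
  else min (cv (x.2 - l)) (cv (x.2 - l - 1)) + 3

lemma fD_lip (hn : 5 ≤ n) (l : ZMod n) :
    ∀ u v, (S2Graph n).Adj u v → fD l v ≤ fD l u + 1 := by
  rintro ⟨s, j⟩ ⟨t, m⟩ h
  simp only [S2Graph, fromRel_adj] at h
  have e1 : ∀ j : ZMod n, j + 1 - l = j - l + 1 := fun j => by ring
  have e3 : ∀ j : ZMod n, j + 1 - l - 1 = j - l := fun j => by ring
  have e4 : ∀ j : ZMod n, j - l - 1 + 1 = j - l := fun j => by ring
  obtain ⟨hne, h | h⟩ := h <;>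
    rcases h with ⟨rfl, rfl⟩ | ⟨rfl, rfl, rfl⟩ | ⟨rfl, rfl, rfl⟩ | ⟨rfl, rfl, rfl⟩ |
      ⟨rfl, rfl, rfl⟩
  case inl.inl =>
    have s1 := cv_step hn (j - l)
    have s2 := cv_step hn (j - l - 1)
    simp only [e4] at s2
    fin_cases s <;> simp [fD, e1, e3] <;> omega
  case inl.inr.inl =>
    simp [fD] <;> omega
  case inl.inr.inr.inl =>
    have s2 := cv_step hn (m - l - 1)
    simp only [e4] at s2
    simp [fD] <;> omega
  case inl.inr.inr.inr.inl =>
    simp [fD] <;> omega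
  case inl.inr.inr.inr.inr =>
    have s1 := cv_step hn (m - l)
    simp [fD, e1, e3] <;> omega
  case inr.inl =>
    have s1 := cv_step hn (m - l)
    have s2 := cv_step hn (m - l - 1)
    simp only [e4] at s2
    fin_cases t <;> simp [fD, e1, e3] <;> omega
  case inr.inr.inl =>
    simp [fD] <;> omega
  case inr.inr.inr.inl =>
    simp [fD] <;> omega
  case inr.inr.inr.inr.inl =>
    simp [fD] <;> omega
  case inr.inr.inr.inr.inr =>
    have s1 := cv_step hn (j - l)
    simp [fD, e1, e3] <;> omega

end S2Aux

theorem stmt15 (n : ℕ) (hn : 5 ≤ n) (i : ZMod n) (w : Fin 4 × ZMod n) :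
    (S2Graph n).dist (0, i) w ≠ (S2Graph n).dist (1, i) w ∧
    (S2Graph n).dist (2, i) w ≠ (S2Graph n).dist (3, i) w := by
  haveI : NeZero n := ⟨by omega⟩
  constructor
  · intro heq
    have hchain := S2Aux.chain_a hn w ((S2Graph n).dist (0, i) w) i rfl (le_of_eq heq)
    obtain ⟨t, l⟩ := w
    have ht : t = 0 := hchain
    subst ht
    have hup := S2Aux.dist_ring_le_cv hn 0 i l
    have hlow := S2Aux.dist_lower hn (S2Aux.fA l) (S2Aux.fA_lip hn l) (0, l) (1, i)
    have hfl : S2Aux.fA l ((0 : Fin 4), l) = 0 := by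
      simp [S2Aux.fA, S2Aux.cv, sub_self]
    have hfi : S2Aux.fA l ((1 : Fin 4), i) = S2Aux.cv (i - l) + 1 := by
      simp [S2Aux.fA]
    have hneg : S2Aux.cv (i - l) = S2Aux.cv (l - i) := by
      have h' : i - l = -(l - i) := by ring
      rw [h', S2Aux.cv_neg hn]
    have hcomm : (S2Graph n).dist ((0 : Fin 4), l) ((1 : Fin 4), i)
        = (S2Graph n).dist ((1 : Fin 4), i) ((0 : Fin 4), l) := SimpleGraph.dist_comm
    rw [hfl, hfi, hneg, hcomm, ← heq] at hlow
    omega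
  · intro heq
    have hchain := S2Aux.chain_d hn w ((S2Graph n).dist (3, i) w) i rfl (le_of_eq heq.symm)
    obtain ⟨t, l⟩ := w
    have ht : t = 3 := hchain
    subst ht
    have hup := S2Aux.dist_ring_le_cv hn 3 i l
    have hlow := S2Aux.dist_lower hn (S2Aux.fD l) (S2Aux.fD_lip hn l) (3, l) (2, i)
    have hfl : S2Aux.fD l ((3 : Fin 4), l) = 0 := by
      simp [S2Aux.fD, S2Aux.cv, sub_self]
    have hfi : S2Aux.fD l ((2 : Fin 4), i) = S2Aux.cv (i - l) + 1 := by
      simp [S2Aux.fD]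
    have hneg : S2Aux.cv (i - l) = S2Aux.cv (l - i) := by
      have h' : i - l = -(l - i) := by ring
      rw [h', S2Aux.cv_neg hn]
    have hcomm : (S2Graph n).dist ((3 : Fin 4), l) ((2 : Fin 4), i)
        = (S2Graph n).dist ((2 : Fin 4), i) ((3 : Fin 4), l) := SimpleGraph.dist_comm
    rw [hfl, hfi, hneg, hcomm, heq] at hlow
    omega
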